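/- Let s be a grid profile with s_k = s^e_k for all k ≤ n, where 1 ≤ n < P. Then there exists a better response path from s to a grid profile s′ with s′_k = s^e_k for all k ≤ n+1, such that along the path (a) the users departing at s^e_1, …, s^e_n never change their departure times, and (b) every departure-time change is to a time strictly later than s^e_n (so the equilibrated users are never overtaken). -/

import Mathlib

/-- Schedule delay cost function `V(d) = β·max(−d,0) + γ·max(d,0)`. -/
noncomputable def sdc (β γ d : ℝ) : ℝ := β * max (-d) 0 + γ * max d 0

/-- Destination arrival times: `d 0 = s 0`, `d (k+1) = max (d k + m/μ) (s (k+1))`. -/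
noncomputable def arr (m μ : ℝ) (s : ℕ → ℝ) : ℕ → ℝ
  | 0 => s 0
  | k + 1 => max (arr m μ s k + m / μ) (s (k + 1))

/-- Trip cost of the `k`-th departing user. -/
noncomputable def cost (β γ m μ : ℝ) (s : ℕ → ℝ) (k : ℕ) : ℝ :=
  (arr m μ s k - s k) + sdc β γ (arr m μ s k)

/-- A time profile: strictly increasing departure times (0-indexed, users `0,…,P-1`). -/
def IsProfile (P : ℕ) (s : ℕ → ℝ) : Prop := ∀ i, i + 1 < P → s i < s (i + 1)

/-- Equilibrium departure time of the first user. -/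
noncomputable def tminus (P : ℕ) (m μ β γ : ℝ) : ℝ :=
  -(m * ((P : ℝ) - 1) / μ) * (γ / (β + γ))

/-- Equilibrium departure time of the last user. -/
noncomputable def tplus (P : ℕ) (m μ β γ : ℝ) : ℝ :=
  tminus P m μ β γ + m * ((P : ℝ) - 1) / μ

/-- Equilibrium trip cost. -/
noncomputable def rho (P : ℕ) (m μ β γ : ℝ) : ℝ :=
  (m * ((P : ℝ) - 1) / μ) * (β * γ / (β + γ))

/-- The equilibrium profile `s^e` (0-indexed: index `k` is the `(k+1)`-st departing user). -/
noncomputable def se (P : ℕ) (m μ β γ : ℝ) (k : ℕ) : ℝ :=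
  if (k : ℤ) ≤ ⌊γ * ((P : ℝ) - 1) / (β + γ)⌋ then
    tminus P m μ β γ + (m * (1 - β) / μ) * (k : ℝ)
  else
    tminus P m μ β γ + (m * (1 + γ) / μ) * (k : ℝ) - m * γ * ((P : ℝ) - 1) / μ

/-- The forecasted cost `Ĉ(t | s) = c`, as a relation (the cases are mutually exclusive
for `t` distinct from all departure times of the strictly increasing profile `s`). -/
def Forecast (P : ℕ) (β γ m μ : ℝ) (s : ℕ → ℝ) (t c : ℝ) : Prop :=
  (∃ k, k + 1 < P ∧ s k < t ∧ t < s (k + 1) ∧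
      arr m μ s (k + 1) - arr m μ s k = m / μ ∧
      c = cost β γ m μ s k +
        (cost β γ m μ s (k + 1) - cost β γ m μ s k) / (s (k + 1) - s k) * (t - s k)) ∨
  (∃ k, k + 1 < P ∧ s k < t ∧ t < s (k + 1) ∧
      m / μ < arr m μ s (k + 1) - arr m μ s k ∧
      ((t ≤ arr m μ s k ∧
          c = cost β γ m μ s k +
            (sdc β γ (arr m μ s k) - cost β γ m μ s k) / (arr m μ s k - s k) * (t - s k)) ∨
        (arr m μ s k < t ∧ c = sdc β γ t))) ∨
  (s (P - 1) < t ∧ t < arr m μ s (P - 1) ∧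
      c = cost β γ m μ s (P - 1) +
        (sdc β γ (arr m μ s (P - 1)) - cost β γ m μ s (P - 1)) /
          (arr m μ s (P - 1) - s (P - 1)) * (t - s (P - 1))) ∨
  ((t < s 0 ∨ arr m μ s (P - 1) ≤ t) ∧ c = sdc β γ t)

/-- Departure times lie on the grid of integer multiples of `Δs` within `[-S, S]`. -/
def OnGrid (P : ℕ) (Δs S : ℝ) (s : ℕ → ℝ) : Prop :=
  ∀ k, k < P → (∃ z : ℤ, s k = (z : ℝ) * Δs) ∧ -S ≤ s k ∧ s k ≤ S

/-- A grid profile. -/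
def GridProfile (P : ℕ) (Δs S : ℝ) (s : ℕ → ℝ) : Prop :=
  IsProfile P s ∧ OnGrid P Δs S s

/-- One better response: the user at departure order `j` of `s` moves to the new time `t`
(whose forecasted cost in `s` is strictly below that user's current trip cost); `s'` is
the resulting profile, i.e. its departure times are those of `s` with `s j` replaced by `t`. -/
def BetterStep (P : ℕ) (β γ m μ : ℝ) (s s' : ℕ → ℝ) (j : ℕ) (t : ℝ) : Prop :=
  j < P ∧ (∀ k, k < P → s k ≠ t) ∧
  (∃ c, Forecast P β γ m μ s t c ∧ c < cost β γ m μ s j) ∧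
  Multiset.map s' (Finset.range P).val =
    t ::ₘ (Multiset.map s (Finset.range P).val).erase (s j)

/-- A better response path between grid profiles. -/
def BRPath (P : ℕ) (β γ m μ Δs S : ℝ) (s s' : ℕ → ℝ) : Prop :=
  ∃ (N : ℕ) (f : ℕ → ℕ → ℝ), f 0 = s ∧ f N = s' ∧
    (∀ i, i ≤ N → GridProfile P Δs S (f i)) ∧
    ∀ i, i < N → ∃ j t, BetterStep P β γ m μ (f i) (f (i + 1)) j t

/-! ### auxiliary -/

/-- Arrival time of the `k`-th user when the bottleneck is continuously congested. -/
noncomputable def aeq (P : ℕ) (m μ β γ : ℝ) (k : ℕ) : ℝ :=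
  tminus P m μ β γ + (k : ℝ) * (m / μ)

section arith

variable {P : ℕ} {m μ β γ : ℝ}
variable (hP : 2 ≤ P) (hm : 0 < m) (hμ : 0 < μ) (hβ : 0 < β) (hβ1 : β < 1) (hγ : 0 < γ)

include hP hm hμ hβ hγ

omit hP hβ in
lemma q_pos : 0 < m / μ := div_pos hm hμ

omit hm hμ hβ hγ in
lemma Pcast : (1:ℝ) ≤ (P:ℝ) - 1 := by
  have : (2:ℝ) ≤ (P:ℝ) := by exact_mod_cast hP
  linarith

omit hP hβ in
lemma branch_iff (k : ℕ) :
    ((k : ℤ) ≤ ⌊γ * ((P : ℝ) - 1) / (β + γ)⌋) ↔ aeq P m μ β γ k ≤ 0 := by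
  have hq : 0 < m / μ := div_pos hm hμ
  have h2 : γ * ((P : ℝ) - 1) / (β + γ) * (m/μ) = m * ((P : ℝ) - 1) / μ * (γ / (β + γ)) := by
    ring
  rw [Int.le_floor]
  unfold aeq tminus
  push_cast
  constructor
  · intro h
    have := mul_le_mul_of_nonneg_right h (le_of_lt hq)
    nlinarith
  · intro h
    have h3 : (k:ℝ) * (m/μ) ≤ γ * ((P : ℝ) - 1) / (β + γ) * (m/μ) := by nlinarith
    exact le_of_mul_le_mul_right h3 hq

end arith


set_option linter.unusedSectionVars false

section arith2

variable {P : ℕ} {m μ β γ : ℝ}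
variable (hP : 2 ≤ P) (hm : 0 < m) (hμ : 0 < μ) (hβ : 0 < β) (hβ1 : β < 1) (hγ : 0 < γ)

lemma sdc_of_nonpos {d : ℝ} (h : d ≤ 0) : sdc β γ d = -(β * d) := by
  unfold sdc
  rw [max_eq_left (by linarith), max_eq_right h]
  ring

lemma sdc_of_nonneg {d : ℝ} (h : 0 ≤ d) : sdc β γ d = γ * d := by
  unfold sdc
  rw [max_eq_right (by linarith), max_eq_left h]
  ring

include hβ hγ in
lemma sdc_lip {x y : ℝ} (hxy : x ≤ y) : sdc β γ x ≤ sdc β γ y + β * (y - x) := by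
  unfold sdc
  have h1 : max (-x) 0 ≤ max (-y) 0 + (y - x) := by
    apply max_le
    · linarith [le_max_left (-y) (0:ℝ)]
    · linarith [le_max_right (-y) (0:ℝ)]
  have h2 : max x 0 ≤ max y 0 := max_le_max hxy le_rfl
  nlinarith

include hβ hγ in
lemma gamma_le_sdc (d : ℝ) : γ * d ≤ sdc β γ d := by
  unfold sdc
  have := mul_le_mul_of_nonneg_left (le_max_left d 0) hγ.le
  have := mul_nonneg hβ.le (le_max_right (-d) 0)
  linarith

include hP hm hμ hβ hγ in
lemma rho_eq (k : ℕ) :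
    rho P m μ β γ = (aeq P m μ β γ k - se P m μ β γ k) + sdc β γ (aeq P m μ β γ k) := by
  rw [se]
  split_ifs with h
  · have ha : aeq P m μ β γ k ≤ 0 := (branch_iff hm hμ hγ k).1 h
    rw [sdc_of_nonpos ha]
    unfold aeq tminus rho
    have hbγ : β + γ ≠ 0 := by positivity
    field_simp
    ring
  · have ha : 0 < aeq P m μ β γ k := by
      by_contra hc
      exact h ((branch_iff hm hμ hγ k).2 (by linarith))
    rw [sdc_of_nonneg ha.le]
    unfold aeq tminus rho
    have hbγ : β + γ ≠ 0 := by positivity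
    field_simp
    ring

include hP hm hμ hβ hγ in
lemma se_le_aeq {k : ℕ} (hk : k < P) : se P m μ β γ k ≤ aeq P m μ β γ k := by
  have hq : 0 < m / μ := div_pos hm hμ
  have hkP : (k:ℝ) ≤ (P:ℝ) - 1 := by
    have : (k:ℝ) + 1 ≤ (P:ℝ) := by exact_mod_cast hk
    linarith
  rw [se]
  split_ifs with h
  · unfold aeq
    have h0 : 0 ≤ (m/μ) * β * k := by positivity
    have he : m * (1 - β) / μ * (k:ℝ) = (k:ℝ) * (m/μ) - (m/μ) * β * k := by ring
    linarith
  · unfold aeq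
    have h0 : 0 ≤ (m/μ) * γ * ((P:ℝ) - 1 - k) := by
      have : (0:ℝ) ≤ (P:ℝ) - 1 - k := by linarith
      positivity
    have he : m * (1 + γ) / μ * (k:ℝ) - m * γ * ((P:ℝ) - 1) / μ
        = (k:ℝ) * (m/μ) - (m/μ) * γ * ((P:ℝ) - 1 - k) := by ring
    linarith

include hP hm hμ hβ hγ in
lemma se_lt_aeq {k : ℕ} (hk1 : 1 ≤ k) (hk : k + 1 < P) :
    se P m μ β γ k < aeq P m μ β γ k := by
  have hq : 0 < m / μ := div_pos hm hμ
  have hkP : (k:ℝ) < (P:ℝ) - 1 := by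
    have : (k:ℝ) + 2 ≤ (P:ℝ) := by exact_mod_cast hk
    linarith
  have hk1' : (1:ℝ) ≤ (k:ℝ) := by exact_mod_cast hk1
  rw [se]
  split_ifs with h
  · unfold aeq
    have h0 : 0 < (m/μ) * β * k := by
      have : (0:ℝ) < (k:ℝ) := by linarith
      positivity
    have he : m * (1 - β) / μ * (k:ℝ) = (k:ℝ) * (m/μ) - (m/μ) * β * k := by ring
    linarith
  · unfold aeq
    have h0 : 0 < (m/μ) * γ * ((P:ℝ) - 1 - k) := by
      have : (0:ℝ) < (P:ℝ) - 1 - k := by linarith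
      positivity
    have he : m * (1 + γ) / μ * (k:ℝ) - m * γ * ((P:ℝ) - 1) / μ
        = (k:ℝ) * (m/μ) - (m/μ) * γ * ((P:ℝ) - 1 - k) := by ring
    linarith

include hm hμ hβ hβ1 hγ in
lemma se_succ_lt (k : ℕ) : se P m μ β γ k < se P m μ β γ (k + 1) := by
  have hq : 0 < m / μ := div_pos hm hμ
  rw [se, se]
  push_cast
  have hq1 : 0 < m * (1 - β) / μ := div_pos (by nlinarith) hμ
  have hq2 : 0 < m * (1 + γ) / μ := div_pos (by nlinarith) hμ
  split_ifs with h1 h2 h2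
  · nlinarith
  · have hT : γ * ((P : ℝ) - 1) / (β + γ) < (k:ℝ) + 1 := by
      have h3 := Int.floor_lt.mp (lt_of_not_ge h2)
      push_cast at h3
      linarith
    have hT' : γ * ((P : ℝ) - 1) < ((k:ℝ) + 1) * (β + γ) := by
      have hbγ : 0 < β + γ := by positivity
      calc γ * ((P : ℝ) - 1) = γ * ((P : ℝ) - 1) / (β + γ) * (β + γ) := by field_simp
        _ < ((k:ℝ) + 1) * (β + γ) := by nlinarith
    have key : 0 < (m/μ) * (1 + γ + (β+γ)*(k:ℝ) - γ*((P:ℝ)-1)) := by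
      apply mul_pos hq
      nlinarith
    have he : m * (1 + γ) / μ * ((k:ℝ)+1) - m * γ * ((P:ℝ) - 1) / μ - m * (1 - β) / μ * (k:ℝ)
        = (m/μ) * (1 + γ + (β+γ)*(k:ℝ) - γ*((P:ℝ)-1)) := by ring
    linarith
  · exact absurd (le_trans (by omega) h2) h1
  · nlinarith

include hm hμ hβ hβ1 hγ in
lemma se_strictMono : StrictMono (se P m μ β γ) :=
  strictMono_nat_of_lt_succ (se_succ_lt hm hμ hβ hβ1 hγ)

include hP hβ hγ in
lemma se_zero : se P m μ β γ 0 = tminus P m μ β γ := by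
  have hP1 : (1:ℝ) ≤ (P:ℝ) - 1 := Pcast hP
  have hT : (0:ℝ) ≤ γ * ((P : ℝ) - 1) / (β + γ) := div_nonneg (by nlinarith) (by positivity)
  rw [se, if_pos]
  · simp
  · exact Int.le_floor.mpr (by exact_mod_cast hT)

include hP hβ hγ in
lemma se_last : se P m μ β γ (P - 1) = tplus P m μ β γ := by
  have hP1 : (1:ℝ) ≤ (P:ℝ) - 1 := Pcast hP
  have hbγ : 0 < β + γ := by positivity
  have hcast : ((P - 1 : ℕ) : ℝ) = (P:ℝ) - 1 := by
    have h1 : 1 ≤ P := by omega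
    push_cast [h1]
    ring
  have hT : γ * ((P : ℝ) - 1) / (β + γ) < ((P - 1 : ℕ) : ℝ) := by
    rw [hcast, div_lt_iff₀ hbγ]
    nlinarith
  rw [se, if_neg (not_le.mpr (Int.floor_lt.mpr (by exact_mod_cast hT)))]
  rw [hcast]
  unfold tplus
  ring

include hP in
lemma aeq_last : aeq P m μ β γ (P - 1) = tplus P m μ β γ := by
  have hcast : ((P - 1 : ℕ) : ℝ) = (P:ℝ) - 1 := by
    have h1 : 1 ≤ P := by omega
    push_cast [h1]
    ring
  unfold aeq tplus
  rw [hcast]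
  ring

include hm hμ hβ hγ in
lemma gamma_tplus : γ * tplus P m μ β γ = rho P m μ β γ := by
  unfold tplus tminus rho
  have hbγ : β + γ ≠ 0 := by positivity
  have hμ0 : μ ≠ 0 := hμ.ne'
  field_simp
  ring

include hP hm hμ hβ hγ in
lemma tplus_pos : 0 < tplus P m μ β γ := by
  have hP1 : (1:ℝ) ≤ (P:ℝ) - 1 := Pcast hP
  have hbγ : 0 < β + γ := by positivity
  unfold tplus tminus
  have h1 : m * ((P:ℝ)-1)/μ > 0 := by positivity
  have h2 : γ / (β + γ) < 1 := by rw [div_lt_one hbγ]; linarith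
  nlinarith

include hP hm hμ hβ hγ in
lemma rho_pos : 0 < rho P m μ β γ := by
  rw [← gamma_tplus hm hμ hβ hγ]
  exact mul_pos hγ (tplus_pos hP hm hμ hβ hγ)

end arith2


section arrsec

variable {P : ℕ} {m μ β γ : ℝ} {s : ℕ → ℝ}

lemma le_arr (m μ : ℝ) (s : ℕ → ℝ) (k : ℕ) : s k ≤ arr m μ s k := by
  cases k with
  | zero => exact le_of_eq rfl
  | succ k => exact le_max_right _ _

lemma arr_succ (m μ : ℝ) (s : ℕ → ℝ) (k : ℕ) :
    arr m μ s (k + 1) = max (arr m μ s k + m / μ) (s (k + 1)) := rfl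

lemma arr_add_le (m μ : ℝ) (s : ℕ → ℝ) (k l : ℕ) :
    arr m μ s k + (l : ℝ) * (m / μ) ≤ arr m μ s (k + l) := by
  induction l with
  | zero => simp
  | succ l ih =>
    have h1 : arr m μ s (k + l) + m / μ ≤ arr m μ s (k + (l + 1)) := by
      rw [show k + (l + 1) = (k + l) + 1 by ring, arr_succ]
      exact le_max_left _ _
    push_cast
    linarith

lemma arr_congr {s' : ℕ → ℝ} (m μ : ℝ) {k : ℕ} (h : ∀ i, i ≤ k → s i = s' i) :
    arr m μ s k = arr m μ s' k := by
  induction k with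
  | zero => exact h 0 le_rfl
  | succ k ih =>
    rw [arr_succ, arr_succ, ih (fun i hi => h i (le_trans hi (Nat.le_succ k))),
      h (k+1) le_rfl]

lemma arr_eq_aeq (m μ : ℝ) {k : ℕ} (h0 : s 0 = tminus P m μ β γ)
    (hb : ∀ i, 1 ≤ i → i ≤ k → s i ≤ aeq P m μ β γ i) :
    arr m μ s k = aeq P m μ β γ k := by
  induction k with
  | zero =>
    show s 0 = _
    rw [h0]
    unfold aeq
    simp
  | succ k ih =>
    have ih' := ih (fun i h1 h2 => hb i h1 (le_trans h2 (Nat.le_succ k)))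
    rw [arr_succ, ih']
    have he : aeq P m μ β γ k + m / μ = aeq P m μ β γ (k + 1) := by
      unfold aeq
      push_cast
      ring
    rw [he, max_eq_left]
    rcases Nat.eq_zero_or_pos (k+1) with h | h
    · omega
    · exact hb (k+1) h le_rfl

lemma cost_last_ge (hP : 2 ≤ P) (hβ : 0 < β) (hγ : 0 < γ) (hm : 0 < m) (hμ : 0 < μ)
    {n : ℕ} (hn : 1 ≤ n) (hnP : n < P)
    (harr : arr m μ s (n - 1) = aeq P m μ β γ (n - 1)) :
    rho P m μ β γ ≤ cost β γ m μ s (P - 1) := by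
  have hchain := arr_add_le m μ s (n - 1) (P - n)
  have hidx : (n - 1) + (P - n) = P - 1 := by omega
  rw [hidx, harr] at hchain
  have hcast : ((n - 1 : ℕ) : ℝ) + ((P - n : ℕ) : ℝ) = (P : ℝ) - 1 := by
    have h1 : ((n - 1 : ℕ) : ℝ) = (n : ℝ) - 1 := by
      push_cast [hn]; ring
    have h2 : ((P - n : ℕ) : ℝ) = (P : ℝ) - (n : ℝ) := by
      push_cast [le_of_lt hnP]; ring
    rw [h1, h2]; ring
  have htp : tplus P m μ β γ ≤ arr m μ s (P - 1) := by
    unfold aeq at hchain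
    unfold tplus
    have : m * ((P:ℝ) - 1) / μ = ((P:ℝ) - 1) * (m / μ) := by ring
    rw [this, ← hcast]
    push_cast
    push_cast at hchain
    linarith
  have h1 : γ * tplus P m μ β γ ≤ γ * arr m μ s (P - 1) :=
    mul_le_mul_of_nonneg_left htp hγ.le
  have h2 := gamma_le_sdc hβ hγ (d := arr m μ s (P - 1))
  have h3 := le_arr m μ s (P - 1)
  rw [← gamma_tplus hm hμ hβ hγ]
  unfold cost
  linarith

end arrsec


section mssec

variable {s : ℕ → ℝ} {t : ℝ}

lemma ms_update (s : ℕ → ℝ) (t : ℝ) {j P : ℕ} (hj : j < P) :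
    Multiset.map (Function.update s j t) (Finset.range P).val =
      t ::ₘ (Multiset.map s (Finset.range P).val).erase (s j) := by
  classical
  have hjm : j ∈ (Finset.range P).val := Finset.mem_val.mpr (Finset.mem_range.mpr hj)
  have hR : (Finset.range P).val = j ::ₘ (Finset.range P).val.erase j :=
    (Multiset.cons_erase hjm).symm
  have hnd : ((Finset.range P).val).Nodup := (Finset.range P).nodup
  rw [hR, Multiset.map_cons, Multiset.map_cons, Multiset.erase_cons_head,
    Function.update_self]
  congr 1
  apply Multiset.map_congr rfl
  intro x hx
  have hxj : x ≠ j := by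
    intro h
    exact hnd.not_mem_erase (h ▸ hx)
  exact Function.update_of_ne hxj _ _

lemma ms_shift_aux (s : ℕ → ℝ) (t : ℝ) (n : ℕ) :
    ∀ Q, n ≤ Q →
      Multiset.map (fun k => if k < n then s k else if k = n then t else s (k - 1))
          (Finset.range (Q + 1)).val =
        t ::ₘ Multiset.map s (Finset.range Q).val := by
  intro Q
  induction Q with
  | zero =>
    intro hQ
    interval_cases n
    simp
  | succ Q ih =>
    intro hQ
    rcases Nat.lt_or_ge n (Q + 1) with h | h
    · have e1 : (Finset.range (Q + 1 + 1)).val = (Q + 1) ::ₘ (Finset.range (Q + 1)).val := by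
        rw [Finset.range_val, Finset.range_val, Multiset.range_succ]
      have e2 : (Finset.range (Q + 1)).val = Q ::ₘ (Finset.range Q).val := by
        rw [Finset.range_val, Finset.range_val, Multiset.range_succ]
      have h1 : (if Q + 1 < n then s (Q + 1) else if Q + 1 = n then t else s (Q + 1 - 1)) = s Q := by
        rw [if_neg (by omega), if_neg (by omega)]
        congr 1
      rw [e1, Multiset.map_cons, ih (by omega), h1, e2, Multiset.map_cons, Multiset.cons_swap]
    · have hn : n = Q + 1 := by omega
      subst hn
      rw [Finset.range_val, Multiset.range_succ, Multiset.map_cons]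
      simp only [lt_self_iff_false, if_false, if_pos rfl]
      congr 1
      rw [← Finset.range_val]
      apply Multiset.map_congr rfl
      intro x hx
      have : x < Q + 1 := by
        rw [Finset.range_val, Multiset.mem_range] at hx
        omega
      rw [if_pos this]

lemma ms_shift (s : ℕ → ℝ) (t : ℝ) {n P : ℕ} (hn : n < P) :
    Multiset.map (fun k => if k < n then s k else if k = n then t else s (k - 1))
        (Finset.range P).val =
      t ::ₘ (Multiset.map s (Finset.range P).val).erase (s (P - 1)) := by
  obtain ⟨Q, rfl⟩ : ∃ Q, P = Q + 1 := ⟨P - 1, by omega⟩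
  have h1 : (Finset.range (Q + 1)).val = Q ::ₘ (Finset.range Q).val := by
    rw [Finset.range_val, Finset.range_val, Multiset.range_succ]
  rw [ms_shift_aux s t n Q (by omega)]
  congr 1
  rw [h1, Multiset.map_cons]
  have h2 : Q + 1 - 1 = Q := by omega
  rw [h2, Multiset.erase_cons_head]

end mssec


section steps

variable {P : ℕ} {m μ β γ : ℝ}

lemma aeq_succ (P : ℕ) (m μ β γ : ℝ) (k : ℕ) :
    aeq P m μ β γ (k + 1) = aeq P m μ β γ k + m / μ := by
  unfold aeq; push_cast; ring

lemma case2_step (hP : 2 ≤ P) (hm : 0 < m) (hμ : 0 < μ)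
    (hβ : 0 < β) (hβ1 : β < 1) (hγ : 0 < γ)
    (g : ℕ → ℝ) (n j : ℕ) (hn : 1 ≤ n) (hnj : n ≤ j) (hjP : j + 1 ≤ P)
    (hpre : ∀ k, k < n → g k = se P m μ β γ k)
    (hlt : ∀ i, n ≤ i → i ≤ j → g i < se P m μ β γ i)
    (hgt : ∀ k, j < k → k < P → se P m μ β γ j < g k)
    (hnext : j + 1 = P ∨ se P m μ β γ (j + 1) ≤ g (j + 1)) :
    BetterStep P β γ m μ g (Function.update g j (se P m μ β γ j)) j (se P m μ β γ j) := by
  have hsm := se_strictMono (P := P) hm hμ hβ hβ1 hγ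
  have hq : 0 < m / μ := div_pos hm hμ
  have hjP' : j < P := by omega
  -- g i ≤ aeq i for 1 ≤ i ≤ j
  have key : ∀ i, 1 ≤ i → i ≤ j → g i ≤ aeq P m μ β γ i := by
    intro i h1 h2
    rcases Nat.lt_or_ge i n with h | h
    · rw [hpre i h]
      exact se_le_aeq hP hm hμ hβ hγ (by omega)
    · exact le_trans (hlt i h h2).le (se_le_aeq hP hm hμ hβ hγ (by omega))
  have h0 : g 0 = tminus P m μ β γ := by
    rw [hpre 0 (by omega)]
    exact se_zero hP hβ hγ
  have harr : ∀ k, k ≤ j → arr m μ g k = aeq P m μ β γ k := by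
    intro k hk
    exact arr_eq_aeq m μ h0 (fun i hi1 hi2 => key i hi1 (le_trans hi2 hk))
  have hcostj : cost β γ m μ g j = rho P m μ β γ + (se P m μ β γ j - g j) := by
    unfold cost
    rw [harr j le_rfl]
    have := rho_eq hP hm hμ hβ hγ (k := j)
    linarith
  have hgj : g j < se P m μ β γ j := hlt j hnj le_rfl
  have hja : se P m μ β γ j ≤ aeq P m μ β γ j := se_le_aeq hP hm hμ hβ hγ hjP'
  refine ⟨hjP', ?_, ?_, ms_update g _ hjP'⟩
  · -- no existing departure at se j
    intro k hk
    rcases Nat.lt_or_ge k n with h | h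
    · rw [hpre k h]
      exact ne_of_lt (hsm (by omega))
    · rcases Nat.lt_or_ge j k with h2 | h2
      · exact ne_of_gt (hgt k h2 hk)
      · rcases Nat.lt_or_ge k j with h3 | h3
        · exact ne_of_lt (lt_trans (hlt k h h3.le) (hsm h3))
        · have : k = j := by omega
          rw [this]
          exact ne_of_lt hgj
  · -- forecast witness
    rcases Nat.eq_or_lt_of_le hjP with hl | hj1
    · -- j = P - 1, use the fourth disjunct
      have hj1 : j = P - 1 := by omega
      have hse : se P m μ β γ j = tplus P m μ β γ := by rw [hj1]; exact se_last hP hβ hγ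
      refine ⟨sdc β γ (se P m μ β γ j), Or.inr (Or.inr (Or.inr ⟨Or.inr ?_, rfl⟩)), ?_⟩
      · rw [← hj1, harr j le_rfl, hse]
        rw [hj1] at hja ⊢
        rw [aeq_last hP] at hja
        exact le_of_eq ((se_last hP hβ hγ).symm ▸ (aeq_last hP (m := m) (μ := μ) (β := β) (γ := γ)))
      · rw [hse, sdc_of_nonneg (tplus_pos hP hm hμ hβ hγ).le, gamma_tplus hm hμ hβ hγ]
        linarith
    · -- j + 1 < P
      have hr : se P m μ β γ (j + 1) ≤ g (j + 1) := hnext.resolve_left (by omega)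
      have ht1 : se P m μ β γ j < g (j + 1) := lt_of_lt_of_le (hsm (Nat.lt_succ_self j)) hr
      have harrj : arr m μ g j = aeq P m μ β γ j := harr j le_rfl
      have haj : aeq P m μ β γ (j + 1) = aeq P m μ β γ j + m / μ := aeq_succ P m μ β γ j
      have hgja : g j < aeq P m μ β γ j := lt_of_lt_of_le hgj hja
      rcases le_or_gt (g (j + 1)) (aeq P m μ β γ (j + 1)) with hb1 | hb2
      · -- congested after j : linear interpolation case
        have hle : g (j + 1) ≤ aeq P m μ β γ j + m / μ := by rw [← haj]; exact hb1
        have harr1 : arr m μ g (j + 1) = aeq P m μ β γ j + m / μ := by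
          rw [arr_succ, harrj, max_eq_left hle]
        have hcost1 : cost β γ m μ g (j + 1)
            = rho P m μ β γ + (se P m μ β γ (j + 1) - g (j + 1)) := by
          unfold cost
          rw [harr1, ← haj]
          have := rho_eq hP hm hμ hβ hγ (k := j + 1)
          linarith
        refine ⟨_, Or.inl ⟨j, hj1, hgj, ht1, by rw [harr1, harrj]; ring, rfl⟩, ?_⟩
        have hd : 0 < g (j + 1) - g j := by
          have := lt_trans hgj ht1
          linarith
        have hnum : cost β γ m μ g (j + 1) - cost β γ m μ g j < 0 := by
          rw [hcost1, hcostj]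
          have h1 : se P m μ β γ (j + 1) - g (j + 1) ≤ 0 := by linarith
          linarith
        have := mul_neg_of_neg_of_pos (div_neg_of_neg_of_pos hnum hd)
          (show (0:ℝ) < se P m μ β γ j - g j by linarith)
        linarith
      · -- queue empties after j
        have hge : aeq P m μ β γ j + m / μ ≤ g (j + 1) := by rw [← haj]; exact hb2.le
        have harr1 : arr m μ g (j + 1) = g (j + 1) := by
          rw [arr_succ, harrj, max_eq_right hge]
        have hgap : m / μ < arr m μ g (j + 1) - arr m μ g j := by
          rw [harr1, harrj]
          linarith
        refine ⟨_, Or.inr (Or.inl ⟨j, hj1, hgj, ht1, hgap, Or.inl ⟨by rw [harrj]; exact hja, rfl⟩⟩), ?_⟩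
        have hcostd : cost β γ m μ g j
            = (aeq P m μ β γ j - g j) + sdc β γ (aeq P m μ β γ j) := by
          unfold cost
          rw [harrj]
        have hd0 : 0 < aeq P m μ β γ j - g j := by linarith
        have hslope : (sdc β γ (arr m μ g j) - cost β γ m μ g j) / (arr m μ g j - g j) = -1 := by
          rw [harrj, hcostd]
          field_simp
          ring
        rw [hslope]
        have : -1 * (se P m μ β γ j - g j) < 0 := by nlinarith
        linarith

end steps


lemma profile_mono {P : ℕ} {g : ℕ → ℝ} (h : IsProfile P g) :
    ∀ k l, k ≤ l → l < P → g k ≤ g l := by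
  have key : ∀ k d, k + d < P → g k ≤ g (k + d) := by
    intro k d
    induction d with
    | zero => intro _; exact le_rfl
    | succ d ih =>
      intro hd
      have h1 : k + d < P := by omega
      have h2 := h (k + d) (by omega)
      exact le_trans (ih h1) (by rw [show k + (d+1) = (k+d) + 1 by ring]; exact h2.le)
  intro k l hkl hl
  have := key k (l - k) (by omega)
  rwa [show k + (l - k) = l by omega] at this

lemma case1_step {P : ℕ} {m μ β γ : ℝ} (hP : 2 ≤ P) (hm : 0 < m) (hμ : 0 < μ)
    (hβ : 0 < β) (hβ1 : β < 1) (hγ : 0 < γ)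
    (g : ℕ → ℝ) (n : ℕ) (hn : 1 ≤ n) (hnP : n < P)
    (hprof : IsProfile P g)
    (hpre : ∀ k, k < n → g k = se P m μ β γ k)
    (hgn : se P m μ β γ n < g n) :
    BetterStep P β γ m μ g
      (fun k => if k < n then g k else if k = n then se P m μ β γ n else g (k - 1))
      (P - 1) (se P m μ β γ n) := by
  obtain ⟨n', rfl⟩ : ∃ n', n = n' + 1 := ⟨n - 1, by omega⟩
  set n := n' + 1 with hndef
  have hsm := se_strictMono (P := P) hm hμ hβ hβ1 hγ
  have hq : 0 < m / μ := div_pos hm hμ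
  have h0 : g 0 = tminus P m μ β γ := by
    rw [hpre 0 (by omega)]
    exact se_zero hP hβ hγ
  have harr' : arr m μ g n' = aeq P m μ β γ n' := by
    apply arr_eq_aeq m μ h0
    intro i h1 h2
    rw [hpre i (by omega)]
    exact se_le_aeq hP hm hμ hβ hγ (by omega)
  have hlast : rho P m μ β γ ≤ cost β γ m μ g (P - 1) := by
    apply cost_last_ge hP hβ hγ hm hμ (n := n) (by omega) hnP
    simpa [hndef] using harr'
  have hgn' : g n' = se P m μ β γ n' := hpre n' (by omega)
  have hsen : se P m μ β γ n' < se P m μ β γ n := hsm (by omega)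
  have hsea : se P m μ β γ n ≤ aeq P m μ β γ n := se_le_aeq hP hm hμ hβ hγ hnP
  have haj : aeq P m μ β γ n = aeq P m μ β γ n' + m / μ := aeq_succ P m μ β γ n'
  have hcost' : cost β γ m μ g n' = rho P m μ β γ := by
    unfold cost
    rw [harr', hgn']
    exact (rho_eq hP hm hμ hβ hγ n').symm
  -- the new time is free
  have hne : ∀ k, k < P → g k ≠ se P m μ β γ n := by
    intro k hk
    rcases Nat.lt_or_ge k n with h | h
    · rw [hpre k h]
      exact ne_of_lt (hsm h)
    · have := profile_mono hprof n k h hk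
      exact ne_of_gt (lt_of_lt_of_le hgn this)
  refine ⟨by omega, hne, ?_, ms_shift g _ hnP⟩
  rcases le_or_gt (g n) (aeq P m μ β γ n) with hb1 | hb2
  · -- bottleneck still congested at g n : interpolation case
    have harrn : arr m μ g n = aeq P m μ β γ n := by
      rw [arr_succ, harr', max_eq_left (by rw [← haj]; exact hb1)]
      exact haj.symm
    have hcostn : cost β γ m μ g n = rho P m μ β γ + (se P m μ β γ n - g n) := by
      unfold cost
      rw [harrn]
      have := rho_eq hP hm hμ hβ hγ (k := n)
      linarith
    refine ⟨_, Or.inl ⟨n', hnP, by rw [hgn']; exact hsen, hgn,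
      by rw [harrn, harr']; linarith [haj], rfl⟩, ?_⟩
    have hd : 0 < g n - g n' := by
      rw [hgn']
      linarith
    have hnum : cost β γ m μ g n - cost β γ m μ g n' < 0 := by
      rw [hcostn, hcost']
      linarith
    have hpos : (0:ℝ) < se P m μ β γ n - g n' := by
      rw [hgn']
      linarith
    have := mul_neg_of_neg_of_pos (div_neg_of_neg_of_pos hnum hd) hpos
    linarith
  · -- queue empties before g n
    have harrn : arr m μ g n = g n := by
      rw [arr_succ, harr', max_eq_right (by rw [← haj]; exact hb2.le)]
    have hgap : m / μ < arr m μ g n - arr m μ g n' := by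
      rw [harrn, harr']
      linarith
    rcases le_or_gt (se P m μ β γ n) (aeq P m μ β γ n') with hc1 | hc2
    · -- new time within the queue shadow of user n'
      refine ⟨_, Or.inr (Or.inl ⟨n', hnP, by rw [hgn']; exact hsen, hgn, hgap,
        Or.inl ⟨by rw [harr']; exact hc1, rfl⟩⟩), ?_⟩
      have hd0 : 0 < aeq P m μ β γ n' - g n' := by
        rw [hgn']
        linarith
      have hslope : (sdc β γ (arr m μ g n') - cost β γ m μ g n') / (arr m μ g n' - g n') = -1 := by
        unfold cost
        rw [harr']
        field_simp
        ring
      rw [hslope]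
      have h1 : -1 * (se P m μ β γ n - g n') < 0 := by
        rw [hgn']
        nlinarith
      linarith
    · -- new time in the idle period : forecast is the schedule delay cost
      refine ⟨_, Or.inr (Or.inl ⟨n', hnP, by rw [hgn']; exact hsen, hgn, hgap,
        Or.inr ⟨by rw [harr']; exact hc2, rfl⟩⟩), ?_⟩
      have hlip := sdc_lip hβ hγ (x := se P m μ β γ n) (y := aeq P m μ β γ n) hsea
      have hrhon := rho_eq hP hm hμ hβ hγ (k := n)
      rcases Nat.lt_or_ge n (P - 1) with hnP1 | hnP1
      · -- n < P-1 : strict slack in the equilibrium identity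
        have hstrict : se P m μ β γ n < aeq P m μ β γ n :=
          se_lt_aeq hP hm hμ hβ hγ (by omega) (by omega)
        have : sdc β γ (se P m μ β γ n) < rho P m μ β γ := by nlinarith
        linarith
      · -- n = P-1 : the mover is the n-th user itself, cost γ·(g n) > ρ
        have hnn : n = P - 1 := by omega
        have haeqt : aeq P m μ β γ n = tplus P m μ β γ := by rw [hnn]; exact aeq_last hP
        have htp : 0 < tplus P m μ β γ := tplus_pos hP hm hμ hβ hγ
        have hgnpos : 0 < g n := by
          rw [← haeqt] at htp
          linarith
        have hcostlast : cost β γ m μ g (P - 1) = γ * g n := by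
          rw [← hnn]
          unfold cost
          rw [harrn, sdc_of_nonneg hgnpos.le]
          ring
        have h2 : sdc β γ (se P m μ β γ n) ≤ rho P m μ β γ := by nlinarith
        have h3 : rho P m μ β γ < γ * g n := by
          rw [← gamma_tplus hm hμ hβ hγ, ← haeqt]
          nlinarith
        rw [hcostlast]
        linarith


lemma se_bounds {P : ℕ} {m μ β γ S : ℝ} (hP : 2 ≤ P) (hm : 0 < m) (hμ : 0 < μ)
    (hβ : 0 < β) (hβ1 : β < 1) (hγ : 0 < γ)
    (hSt : -S < tminus P m μ β γ) (hStp : tplus P m μ β γ < S)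
    {k : ℕ} (hk : k < P) : -S ≤ se P m μ β γ k ∧ se P m μ β γ k ≤ S := by
  have hsm := se_strictMono (P := P) hm hμ hβ hβ1 hγ
  constructor
  · have h1 : se P m μ β γ 0 ≤ se P m μ β γ k := hsm.monotone (Nat.zero_le k)
    rw [se_zero hP hβ hγ] at h1
    linarith
  · have h1 : se P m μ β γ k ≤ se P m μ β γ (P - 1) := hsm.monotone (by omega)
    rw [se_last hP hβ hγ] at h1
    linarith

theorem ordered_path_extension (P : ℕ) (hP : 2 ≤ P) (m μ β γ Δs S : ℝ)
    (hm : 0 < m) (hm1 : m ≤ 1) (hμ : 0 < μ)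
    (hβ : 0 < β) (hβ1 : β < 1) (hγ : 0 < γ)
    (hΔs : 0 < Δs) (hS : 0 < S)
    (hgm : ∃ z : ℤ, m / μ = (z : ℝ) * Δs)
    (hgt : ∃ z : ℤ, tminus P m μ β γ = (z : ℝ) * Δs)
    (hgtp : ∃ z : ℤ, tplus P m μ β γ = (z : ℝ) * Δs)
    (hgse : ∀ k, k < P → ∃ z : ℤ, se P m μ β γ k = (z : ℝ) * Δs)
    (hSt : -S < tminus P m μ β γ) (hStp : tplus P m μ β γ < S)
    (s : ℕ → ℝ) (hgrid : GridProfile P Δs S s)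
    (n : ℕ) (hn : 1 ≤ n) (hnP : n < P)
    (heqn : ∀ k, k < n → s k = se P m μ β γ k) :
    ∃ (N : ℕ) (f : ℕ → ℕ → ℝ),
      f 0 = s ∧
      (∀ i, i ≤ N → GridProfile P Δs S (f i)) ∧
      (∀ i, i < N → ∃ j t, BetterStep P β γ m μ (f i) (f (i + 1)) j t ∧
        n ≤ j ∧ se P m μ β γ (n - 1) < t) ∧
      (∀ i, i ≤ N → ∀ k, k < n → f i k = se P m μ β γ k) ∧
      (∀ k, k < n + 1 → f N k = se P m μ β γ k) := by
  classical
  have hsm := se_strictMono (P := P) hm hμ hβ hβ1 hγ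
  obtain ⟨hprof, hongrid⟩ := hgrid
  have hsebd := fun {k} (hk : k < P) => se_bounds hP hm hμ hβ hβ1 hγ hSt hStp hk
  rcases lt_trichotomy (s n) (se P m μ β γ n) with hlt | heq | hgtn
  · -- s n < se n : iterative path of length j0 + 1 - n
    set e := se P m μ β γ with hedef
    set Q : ℕ → Prop := fun j => ∀ i, n ≤ i → i ≤ j → s i < e i with hQdef
    have hQn : Q n := by
      intro i h1 h2
      have : i = n := by omega
      rw [this]
      exact hlt
    set j0 := Nat.findGreatest Q (P - 1) with hj0def
    have hj0n : n ≤ j0 := Nat.le_findGreatest (by omega) hQn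
    have hj0P : j0 ≤ P - 1 := Nat.findGreatest_le _
    have hrun : ∀ i, n ≤ i → i ≤ j0 → s i < e i := Nat.findGreatest_spec (by omega) hQn
    have hend : j0 + 1 = P ∨ e (j0 + 1) ≤ s (j0 + 1) := by
      rcases Nat.lt_or_ge (j0 + 1) P with h | h
      · right
        by_contra hc
        push_neg at hc
        have hng : ¬ Q (j0 + 1) :=
          Nat.findGreatest_is_greatest (Nat.lt_succ_self j0) (by omega)
        apply hng
        intro i h1 h2
        rcases Nat.lt_or_ge i (j0 + 1) with h3 | h3
        · exact hrun i h1 (by omega)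
        · have : i = j0 + 1 := by omega
          rw [this]
          exact hc
      · left
        omega
    set N := j0 + 1 - n with hNdef
    set f : ℕ → ℕ → ℝ := fun i k => if j0 - i < k ∧ k ≤ j0 then e k else s k with hfdef
    have hf0 : f 0 = s := by
      funext k
      simp only [hfdef]
      rw [if_neg (by omega)]
    have hfval_lo : ∀ i k, k ≤ j0 - i → f i k = s k := by
      intro i k hk
      simp only [hfdef]
      rw [if_neg (by omega)]
    have hfval_mid : ∀ i k, j0 - i < k → k ≤ j0 → f i k = e k := by
      intro i k h1 h2
      simp only [hfdef]
      rw [if_pos ⟨h1, h2⟩]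
    have hfval_hi : ∀ i k, j0 < k → f i k = s k := by
      intro i k hk
      simp only [hfdef]
      rw [if_neg (by omega)]
    have hfpre : ∀ i, ∀ k, k < n → f i k = e k := by
      intro i k hk
      simp only [hfdef]
      split_ifs with h
      · rfl
      · exact heqn k hk
    -- every f i is a grid profile
    have hfgrid : ∀ i, GridProfile P Δs S (f i) := by
      intro i
      constructor
      · intro k hk1
        rcases Nat.lt_or_ge (k + 1) (j0 - i + 1) with h1 | h1
        · rw [hfval_lo i k (by omega), hfval_lo i (k+1) (by omega)]
          exact hprof k hk1
        · rcases Nat.lt_or_ge j0 (k + 1) with h2 | h2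
          · -- k+1 > j0
            rcases Nat.lt_or_ge j0 k with h3 | h3
            · rw [hfval_hi i k h3, hfval_hi i (k+1) h2]
              exact hprof k hk1
            · -- k = j0, k + 1 = j0 + 1
              have hk0 : k = j0 := by omega
              have hs1 : f i (k+1) = s (k+1) := hfval_hi i (k+1) h2
              have he1 : e (j0 + 1) ≤ s (j0 + 1) := by
                rcases hend with h | h
                · omega
                · exact h
              rcases Nat.lt_or_ge (j0 - i) k with h4 | h4
              · rw [hfval_mid i k h4 (by omega), hs1, hk0]
                exact lt_of_lt_of_le (hsm (Nat.lt_succ_self j0)) he1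
              · rw [hfval_lo i k h4, hs1]
                exact hprof k hk1
          · -- k + 1 in the window (j0 - i, j0]
            have hmid1 : f i (k+1) = e (k+1) := hfval_mid i (k+1) (by omega) h2
            rcases Nat.lt_or_ge (j0 - i) k with h3 | h3
            · rw [hfval_mid i k h3 (by omega), hmid1]
              exact hsm (Nat.lt_succ_self k)
            · rw [hfval_lo i k h3, hmid1]
              rcases Nat.lt_or_ge k n with h4 | h4
              · rw [heqn k h4]
                exact hsm (Nat.lt_succ_self k)
              · exact lt_trans (hrun k h4 (by omega)) (hsm (Nat.lt_succ_self k))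
      · intro k hk
        simp only [hfdef]
        split_ifs with h
        · exact ⟨hgse k hk, hsebd hk⟩
        · exact hongrid k hk
    refine ⟨N, f, hf0, fun i _ => hfgrid i, ?_, fun i _ k hk => hfpre i k hk, ?_⟩
    · -- the better-response steps
      intro i hi
      set j := j0 - i with hjdef
      have hjn : n ≤ j := by omega
      have hjle : j ≤ j0 := by omega
      have hi1 : i + 1 ≤ j0 := by omega
      have hupd : f (i + 1) = Function.update (f i) j (e j) := by
        funext k
        by_cases hkj : k = j
        · rw [hkj, Function.update_self]
          exact hfval_mid (i+1) j (by omega) hjle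
        · rw [Function.update_of_ne hkj]
          simp only [hfdef]
          split_ifs with h1 h2 h2
          · rfl
          · omega
          · omega
          · rfl
      refine ⟨j, e j, ?_, hjn, hsm (by omega)⟩
      rw [hupd]
      apply case2_step hP hm hμ hβ hβ1 hγ (f i) n j hn hjn (by omega)
        (fun k hk => hfpre i k hk)
      · intro i' h1 h2
        rw [hfval_lo i i' (by omega)]
        exact hrun i' h1 (by omega)
      · intro k h1 h2
        rcases Nat.lt_or_ge j0 k with h3 | h3
        · rw [hfval_hi i k h3]
          have he1 : e (j0 + 1) ≤ s (j0 + 1) := by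
            rcases hend with h | h
            · omega
            · exact h
          calc e j < e (j0 + 1) := hsm (by omega)
            _ ≤ s (j0 + 1) := he1
            _ ≤ s k := profile_mono hprof _ _ (by omega) h2
        · rw [hfval_mid i k (by omega) h3]
          exact hsm (by omega)
      · rcases Nat.lt_or_ge (j + 1) (j0 + 1) with h1 | h1
        · right
          rw [hfval_mid i (j+1) (by omega) (by omega)]
        · have hjj : j = j0 := by omega
          rcases hend with h | h
          · left
            omega
          · right
            rw [hfval_hi i (j+1) (by omega), hjj]
            exact h
    · -- final profile agrees with the equilibrium up to n
      intro k hk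
      rcases Nat.lt_or_ge k n with h | h
      · exact hfpre N k h
      · have hkn : k = n := by omega
        rw [hkn]
        exact hfval_mid N n (by omega) (by omega)
  · -- s n = se n already : empty path
    refine ⟨0, fun _ => s, rfl, fun i _ => ⟨hprof, hongrid⟩, fun i hi => absurd hi (Nat.not_lt_zero i),
      fun i _ k hk => heqn k hk, ?_⟩
    intro k hk
    rcases Nat.lt_or_ge k n with h | h
    · exact heqn k h
    · have : k = n := by omega
      rw [this]
      exact heq
  · -- se n < s n : single move of the last user
    set e := se P m μ β γ with hedef
    set s' : ℕ → ℝ := fun k => if k < n then s k else if k = n then e n else s (k - 1) with hsdef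
    have hs'val : ∀ k, n < k → s' k = s (k - 1) := by
      intro k hk
      simp only [hsdef]
      rw [if_neg (by omega), if_neg (by omega)]
    have hs'n : s' n = e n := by
      simp only [hsdef]
      rw [if_neg (by omega)]
      simp
    have hs'lo : ∀ k, k < n → s' k = s k := by
      intro k hk
      simp only [hsdef]
      rw [if_pos hk]
    have hgrid' : GridProfile P Δs S s' := by
      constructor
      · intro k hk1
        rcases Nat.lt_or_ge (k + 1) n with h1 | h1
        · rw [hs'lo k (by omega), hs'lo (k+1) h1]
          exact hprof k hk1
        · rcases Nat.lt_or_ge n (k + 1) with h2 | h2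
          · rcases Nat.lt_or_ge n k with h3 | h3
            · rw [hs'val k h3, hs'val (k+1) h2]
              have := hprof (k-1) (by omega)
              rwa [show k - 1 + 1 = k by omega] at this
            · have : k = n := by omega
              rw [this, hs'n, hs'val (n+1) (by omega)]
              simpa using hgtn
          · have : k + 1 = n := by omega
            rw [this, hs'lo k (by omega), hs'n, heqn k (by omega)]
            exact hsm (by omega)
      · intro k hk
        simp only [hsdef]
        split_ifs with h1 h2
        · exact hongrid k hk
        · exact ⟨hgse n hnP, hsebd hnP⟩
        · exact hongrid (k-1) (by omega)
    refine ⟨1, fun i => if i = 0 then s else s', rfl, ?_, ?_, ?_, ?_⟩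
    · intro i _
      by_cases h : i = 0
      · simp only [if_pos h]; exact ⟨hprof, hongrid⟩
      · simp only [if_neg h]; exact hgrid'
    · intro i hi
      have : i = 0 := by omega
      subst this
      refine ⟨P - 1, e n, ?_, by omega, hsm (by omega)⟩
      show BetterStep P β γ m μ s s' (P - 1) (e n)
      exact case1_step hP hm hμ hβ hβ1 hγ s n hn hnP hprof heqn hgtn
    · intro i _ k hk
      by_cases h : i = 0
      · simp only [if_pos h]; exact heqn k hk
      · simp only [if_neg h]; rw [hs'lo k hk]; exact heqn k hk
    · intro k hk
      show s' k = e k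
      rcases Nat.lt_or_ge k n with h | h
      · rw [hs'lo k h]; exact heqn k h
      · have : k = n := by omega
        rw [this, hs'n]
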